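/- The set of natural numbers N whose Zeckendorf expansion ends in the digits d_1 d_0 = 10 is exactly {B(A(n)) : n ≥ 1} = {2⌊nφ⌋ + n − 1 : n ≥ 1}, where A(n) = ⌊nφ⌋ and B(n) = ⌊nφ²⌋. -/

import Mathlib

noncomputable def phi : ℝ := (1 + Real.sqrt 5) / 2

/-- Lower Wythoff sequence. -/
noncomputable def A (n : ℕ) : ℕ := (⌊(n : ℝ) * phi⌋).toNat

/-- Upper Wythoff sequence. -/
noncomputable def B (n : ℕ) : ℕ := (⌊(n : ℝ) * phi ^ 2⌋).toNat

/-- `d` is the digit sequence of the Zeckendorf expansion of `N`: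
digits are 0/1, no two consecutive 1's, finitely many nonzero digits,
and `N = Σ dᵢ · F_{i+2}`. -/
def IsZeck (N : ℕ) (d : ℕ → ℕ) : Prop :=
  (∀ i, d i ≤ 1) ∧ (∀ i, ¬(d i = 1 ∧ d (i + 1) = 1)) ∧
  (Function.support d).Finite ∧ N = ∑ᶠ i, d i * Nat.fib (i + 2)

open Real goldenRatio List Nat
open scoped symmDiff

lemma phi_eq : phi = goldenRatio := rfl

/-- admissible ascending list of digit indices -/
def Adm (l : List ℕ) : Prop := l.Pairwise (fun a b => a + 2 ≤ b)

def zval (l : List ℕ) : ℕ := (l.map (fun i => Nat.fib (i + 2))).sum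

lemma zval_nil : zval [] = 0 := rfl

lemma zval_cons (m : ℕ) (t : List ℕ) : zval (m :: t) = Nat.fib (m + 2) + zval t := rfl

lemma zval_append (l₁ l₂ : List ℕ) : zval (l₁ ++ l₂) = zval l₁ + zval l₂ := by
  simp [zval]

lemma Adm.tail {m : ℕ} {t : List ℕ} (h : Adm (m :: t)) : Adm t := (List.pairwise_cons.1 h).2

lemma Adm.head_le {m : ℕ} {t : List ℕ} (h : Adm (m :: t)) : ∀ i ∈ t, m + 2 ≤ i :=
  (List.pairwise_cons.1 h).1

lemma Adm.nodup {l : List ℕ} (h : Adm l) : l.Nodup :=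
  h.imp (by omega)

/-- upper bound: an admissible list with entries ≤ K has value < fib (K+3) -/
lemma zval_lt : ∀ l : List ℕ, Adm l → ∀ K : ℕ, (∀ i ∈ l, i ≤ K) → zval l < Nat.fib (K + 3) := by
  intro l
  induction l using List.reverseRecOn with
  | nil =>
    intro _ K _
    have : 0 < Nat.fib (K + 3) := Nat.fib_pos.2 (by omega)
    simpa [zval_nil] using this
  | append_singleton l m ih =>
    intro h K hK
    rw [Adm, List.pairwise_append] at h
    obtain ⟨h1, -, h3⟩ := h
    have hm : m ≤ K := hK m (by simp)
    have hlt : zval l < Nat.fib (m + 1) := by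
      rcases Nat.eq_zero_or_pos l.length with h0 | h0
      · have : l = [] := List.length_eq_zero_iff.1 h0
        subst this
        simp [zval_nil, Nat.fib_pos]
      · obtain ⟨a, t, rfl⟩ := List.exists_cons_of_ne_nil (List.length_pos_iff.1 h0)
        have ha : a + 2 ≤ m := h3 a (by simp) m (by simp)
        have := ih h1 (m - 2) (fun i hi => by have := h3 i hi m (by simp); omega)
        have hm2 : m - 2 + 3 ≤ m + 1 := by omega
        exact lt_of_lt_of_le this (Nat.fib_mono hm2)
    have : zval (l ++ [m]) = zval l + Nat.fib (m + 2) := by rw [zval_append, zval_cons, zval_nil]; ring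
    rw [this]
    calc zval l + Nat.fib (m + 2) < Nat.fib (m + 1) + Nat.fib (m + 2) := by omega
    _ = Nat.fib (m + 3) := (Nat.fib_add_two).symm
    _ ≤ Nat.fib (K + 3) := Nat.fib_mono (by omega)

/-- uniqueness -/
lemma zval_inj : ∀ n : ℕ, ∀ l l' : List ℕ, Adm l → Adm l' → zval l = n → zval l' = n → l = l' := by
  intro n
  induction n using Nat.strong_induction_on with
  | _ n ih =>
    intro l l' hl hl' hv hv'
    have hlast : ∀ la : List ℕ, ∀ ma : ℕ, Adm (la ++ [ma]) →
        (∀ i ∈ la ++ [ma], i ≤ ma) ∧ Adm la := by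
      intro la ma h
      rw [Adm, List.pairwise_append] at h
      refine ⟨?_, h.1⟩
      intro i hi
      rcases List.mem_append.1 hi with h' | h'
      · have := h.2.2 i h' ma (by simp); omega
      · simp at h'; omega
    rcases List.eq_nil_or_concat l with rfl | ⟨la, ma, rfl⟩
    all_goals rcases List.eq_nil_or_concat l' with rfl | ⟨lb, mb, rfl⟩
    all_goals simp only [List.concat_eq_append] at hl hl' hv hv' ⊢
    · exfalso
      rw [zval_nil] at hv; subst hv
      rw [zval_append, zval_cons, zval_nil] at hv'
      have : 0 < Nat.fib (mb + 2) := Nat.fib_pos.2 (by omega)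
      omega
    · exfalso
      rw [zval_nil] at hv'; subst hv'
      rw [zval_append, zval_cons, zval_nil] at hv
      have : 0 < Nat.fib (ma + 2) := Nat.fib_pos.2 (by omega)
      omega
    · obtain ⟨hba, hAa⟩ := hlast la ma hl
      obtain ⟨hbb, hAb⟩ := hlast lb mb hl'
      have hmm : ma = mb := by
        by_contra hne
        rcases Nat.lt_or_ge ma mb with hlt | hge
        · have h1 : zval (la ++ [ma]) < Nat.fib (ma + 3) := zval_lt _ hl ma hba
          have h2 : Nat.fib (mb + 2) ≤ zval (lb ++ [mb]) := by
            rw [zval_append, zval_cons, zval_nil]; omega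
          have : Nat.fib (ma + 3) ≤ Nat.fib (mb + 2) := Nat.fib_mono (by omega)
          omega
        · have hlt : mb < ma := by omega
          have h1 : zval (lb ++ [mb]) < Nat.fib (mb + 3) := zval_lt _ hl' mb hbb
          have h2 : Nat.fib (ma + 2) ≤ zval (la ++ [ma]) := by
            rw [zval_append, zval_cons, zval_nil]; omega
          have : Nat.fib (mb + 3) ≤ Nat.fib (ma + 2) := Nat.fib_mono (by omega)
          omega
      subst hmm
      have hfib : 0 < Nat.fib (ma + 2) := Nat.fib_pos.2 (by omega)
      have hva : zval la = n - Nat.fib (ma + 2) := by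
        rw [zval_append, zval_cons, zval_nil] at hv; omega
      have hvb : zval lb = n - Nat.fib (ma + 2) := by
        rw [zval_append, zval_cons, zval_nil] at hv'; omega
      have hlt : n - Nat.fib (ma + 2) < n := by
        rw [zval_append, zval_cons, zval_nil] at hv; omega
      rw [ih _ hlt la lb hAa hAb hva hvb]

lemma le_fib_add_two : ∀ K : ℕ, K + 1 ≤ Nat.fib (K + 2) := by
  intro K
  induction K with
  | zero => simp
  | succ k ih =>
    have h1 : 1 ≤ Nat.fib (k + 1) := Nat.fib_pos.2 (by omega)
    have h2 : Nat.fib (k + 3) = Nat.fib (k + 1) + Nat.fib (k + 2) := Nat.fib_add_two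
    show k + 2 ≤ Nat.fib (k + 3)
    omega

/-- existence of Zeckendorf representation -/
lemma zval_exists : ∀ n : ℕ, ∃ l : List ℕ, Adm l ∧ zval l = n ∧ ∀ i ∈ l, Nat.fib (i + 2) ≤ n := by
  intro n
  induction n using Nat.strong_induction_on with
  | _ n ih =>
    classical
    rcases Nat.eq_zero_or_pos n with rfl | hn
    · exact ⟨[], List.Pairwise.nil, rfl, by simp⟩
    · set K := Nat.findGreatest (fun K => Nat.fib (K + 2) ≤ n) n with hK
      have hP : Nat.fib (K + 2) ≤ n := by
        rw [hK]
        exact Nat.findGreatest_spec (P := fun K => Nat.fib (K + 2) ≤ n) (m := 0) (by omega)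
          (by show Nat.fib (0 + 2) ≤ n; rw [show Nat.fib (0 + 2) = 1 from rfl]; omega)
      have hKmax : n < Nat.fib (K + 3) := by
        by_contra hcon
        push_neg at hcon
        have hfib13 : Nat.fib (K + 1 + 2) = Nat.fib (K + 3) := rfl
        have hKn : K + 1 ≤ n := by
          have := le_fib_add_two (K + 1)
          rw [hfib13] at this
          omega
        refine Nat.findGreatest_is_greatest (P := fun K => Nat.fib (K + 2) ≤ n) (k := K + 1)
          (by omega) hKn ?_
        simpa [hfib13] using hcon
      have hfibpos : 0 < Nat.fib (K + 2) := Nat.fib_pos.2 (by omega)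
      set r := n - Nat.fib (K + 2) with hr
      have hrlt : r < n := by omega
      obtain ⟨l, hAdm, hval, hbd⟩ := ih r hrlt
      have hsmall : ∀ i ∈ l, i + 2 ≤ K := by
        intro i hi
        have h1 : Nat.fib (i + 2) ≤ r := hbd i hi
        have h2 : r < Nat.fib (K + 1) := by
          have : Nat.fib (K + 3) = Nat.fib (K + 1) + Nat.fib (K + 2) := Nat.fib_add_two
          omega
        by_contra hcon
        push_neg at hcon
        have : Nat.fib (K + 1) ≤ Nat.fib (i + 2) := Nat.fib_mono (by omega)
        omega
      refine ⟨l ++ [K], ?_, ?_, ?_⟩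
      · rw [Adm, List.pairwise_append]
        exact ⟨hAdm, List.pairwise_singleton _ _, fun a ha b hb => by simp at hb; subst hb; exact hsmall a ha⟩
      · rw [zval_append, zval_cons, zval_nil, hval]; omega
      · intro i hi
        rcases List.mem_append.1 hi with h | h
        · exact le_trans (hbd i h) (by omega)
        · simp at h; subst h; exact hP

/-! ### analytic lemmas -/

lemma inv_gold_pos : (0:ℝ) < goldenRatio⁻¹ := inv_pos.2 goldenRatio_pos

lemma inv_gold_lt_one : goldenRatio⁻¹ < 1 := by
  rw [inv_lt_one_iff₀]; right; exact one_lt_goldenRatio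

lemma abs_goldConj : |goldenConj| = goldenRatio⁻¹ := by
  rw [abs_of_neg goldenConj_neg, inv_goldenRatio]

lemma inv_gold_base : (goldenRatio⁻¹) + (goldenRatio⁻¹) ^ 2 = 1 := by
  have h := goldenRatio_sq
  have hne : goldenRatio ≠ 0 := goldenRatio_ne_zero
  field_simp
  nlinarith [Real.sq_sqrt (show (0:ℝ) ≤ 5 by norm_num), Real.sqrt_nonneg 5]

lemma inv_gold_pow_succ (k : ℕ) :
    (goldenRatio⁻¹) ^ (k + 2) + (goldenRatio⁻¹) ^ (k + 3) = (goldenRatio⁻¹) ^ (k + 1) := by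
  calc (goldenRatio⁻¹) ^ (k + 2) + (goldenRatio⁻¹) ^ (k + 3)
      = (goldenRatio⁻¹) ^ (k + 1) * ((goldenRatio⁻¹) + (goldenRatio⁻¹) ^ 2) := by ring
    _ = (goldenRatio⁻¹) ^ (k + 1) := by rw [inv_gold_base, mul_one]

def sval (l : List ℕ) : ℕ := zval (l.map (· + 1))

lemma sval_cons (m : ℕ) (t : List ℕ) : sval (m :: t) = Nat.fib (m + 3) + sval t := rfl

/-- key bound for the fractional parts -/
lemma key_bound : ∀ l : List ℕ, Adm l → ∀ b : ℕ, (∀ i ∈ l, b ≤ i) →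
    |(sval l : ℝ) - (zval l : ℝ) * goldenRatio| ≤ (goldenRatio⁻¹) ^ (b + 1) := by
  intro l
  induction l with
  | nil =>
    intro _ b _
    simp [sval, zval_nil]
    positivity
  | cons m t ih =>
    intro h b hb
    have hbm : b ≤ m := hb m (by simp)
    have ht : ∀ i ∈ t, m + 2 ≤ i := h.head_le
    have hx : (sval (m :: t) : ℝ) - (zval (m :: t) : ℝ) * goldenRatio
        = goldenConj ^ (m + 2) + ((sval t : ℝ) - (zval t : ℝ) * goldenRatio) := by
      rw [sval_cons, zval_cons]
      push_cast
      have := fib_succ_sub_goldenRatio_mul_fib (m + 2)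
      rw [show m + 2 + 1 = m + 3 from rfl] at this
      linarith [this]
    rw [hx]
    calc |goldenConj ^ (m + 2) + ((sval t : ℝ) - (zval t : ℝ) * goldenRatio)|
        ≤ |goldenConj ^ (m + 2)| + |(sval t : ℝ) - (zval t : ℝ) * goldenRatio| := abs_add_le _ _
      _ ≤ (goldenRatio⁻¹) ^ (m + 2) + (goldenRatio⁻¹) ^ (m + 3) := by
          have h1 : |goldenConj ^ (m + 2)| = (goldenRatio⁻¹) ^ (m + 2) := by
            rw [abs_pow, abs_goldConj]
          have h2 := ih h.tail (m + 2) ht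
          rw [h1]
          linarith [h2]
      _ = (goldenRatio⁻¹) ^ (m + 1) := inv_gold_pow_succ m
      _ ≤ (goldenRatio⁻¹) ^ (b + 1) :=
          pow_le_pow_of_le_one (le_of_lt inv_gold_pos) (le_of_lt inv_gold_lt_one) (by omega)

lemma goldConj_eq : goldenConj = -goldenRatio⁻¹ := by
  rw [inv_goldenRatio]; ring

lemma sval_pos (m : ℕ) (t : List ℕ) : 1 ≤ sval (m :: t) := by
  rw [sval_cons]
  have : 0 < Nat.fib (m + 3) := Nat.fib_pos.2 (by omega)
  omega

lemma x_decomp (m : ℕ) (t : List ℕ) :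
    (sval (m :: t) : ℝ) - (zval (m :: t) : ℝ) * goldenRatio
      = goldenConj ^ (m + 2) + ((sval t : ℝ) - (zval t : ℝ) * goldenRatio) := by
  rw [sval_cons, zval_cons]
  push_cast
  have := fib_succ_sub_goldenRatio_mul_fib (m + 2)
  rw [show m + 2 + 1 = m + 3 from rfl] at this
  linarith [this]

lemma A_cast (n : ℕ) : (A n : ℤ) = ⌊(n : ℝ) * phi⌋ := by
  rw [A, Int.toNat_of_nonneg]
  apply Int.floor_nonneg.2
  rw [phi_eq]
  positivity

lemma floor_lemma (m : ℕ) (t : List ℕ) (h : Adm (m :: t)) :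
    (if Even m then (⌊(zval (m :: t) : ℝ) * goldenRatio⌋ = (sval (m :: t) : ℤ) - 1)
     else (⌊(zval (m :: t) : ℝ) * goldenRatio⌋ = (sval (m :: t) : ℤ))) := by
  have ht := key_bound t h.tail (m + 2) h.head_le
  have hd := x_decomp m t
  have h1 : (goldenRatio⁻¹ : ℝ) ^ (m + 3) < goldenRatio⁻¹ ^ (m + 2) :=
    pow_lt_pow_right_of_lt_one₀ inv_gold_pos inv_gold_lt_one (by omega)
  have h2 : (goldenRatio⁻¹ : ℝ) ^ (m + 1) < 1 := by
    calc (goldenRatio⁻¹ : ℝ) ^ (m + 1) ≤ goldenRatio⁻¹ ^ 1 :=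
          pow_le_pow_of_le_one (le_of_lt inv_gold_pos) (le_of_lt inv_gold_lt_one) (by omega)
      _ < 1 := by simpa using inv_gold_lt_one
  have habs := abs_le.1 ht
  by_cases hm : Even m
  · simp only [hm, if_true]
    have hpow : goldenConj ^ (m + 2) = goldenRatio⁻¹ ^ (m + 2) := by
      have he : Even (m + 2) := hm.add even_two
      rw [goldConj_eq, he.neg_pow]
    have hx1 : (0:ℝ) < (sval (m :: t) : ℝ) - (zval (m :: t) : ℝ) * goldenRatio := by
      rw [hd, hpow]; linarith [habs.1, h1]
    have hx2 : (sval (m :: t) : ℝ) - (zval (m :: t) : ℝ) * goldenRatio < 1 := by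
      rw [hd, hpow]
      have := inv_gold_pow_succ m
      linarith [habs.2]
    rw [Int.floor_eq_iff]
    constructor
    · push_cast; linarith
    · push_cast; linarith
  · simp only [hm, if_false]
    have hodd : Odd (m + 2) := (Nat.not_even_iff_odd.1 hm).add_even even_two
    have hpow : goldenConj ^ (m + 2) = -(goldenRatio⁻¹ ^ (m + 2)) := by
      rw [goldConj_eq, hodd.neg_pow]
    have hx1 : (sval (m :: t) : ℝ) - (zval (m :: t) : ℝ) * goldenRatio < 0 := by
      rw [hd, hpow]; linarith [habs.2, h1]
    have hx2 : -1 < (sval (m :: t) : ℝ) - (zval (m :: t) : ℝ) * goldenRatio := by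
      rw [hd, hpow]
      have := inv_gold_pow_succ m
      linarith [habs.1]
    rw [Int.floor_eq_iff]
    constructor
    · push_cast; linarith
    · push_cast; linarith

lemma A_even (m : ℕ) (t : List ℕ) (hm : Even m) (h : Adm (m :: t)) :
    A (zval (m :: t)) + 1 = sval (m :: t) := by
  have hf := floor_lemma m t h
  rw [if_pos hm] at hf
  have := A_cast (zval (m :: t))
  rw [phi_eq] at this
  have hs := sval_pos m t
  omega

lemma A_odd (m : ℕ) (t : List ℕ) (hm : ¬ Even m) (h : Adm (m :: t)) :
    A (zval (m :: t)) = sval (m :: t) := by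
  have hf := floor_lemma m t h
  rw [if_neg hm] at hf
  have := A_cast (zval (m :: t))
  rw [phi_eq] at this
  omega

lemma B_eq (n : ℕ) : B n = n + A n := by
  have h1 : (n : ℝ) * phi ^ 2 = (n : ℝ) * phi + (n : ℕ) := by
    rw [phi_eq, goldenRatio_sq]; push_cast; ring
  rw [B, h1, Int.floor_add_natCast]
  have h2 : (0:ℤ) ≤ ⌊(n : ℝ) * phi⌋ := by
    apply Int.floor_nonneg.2; rw [phi_eq]; positivity
  rw [A]
  omega

lemma gold_inv_eq : goldenRatio⁻¹ = goldenRatio - 1 := by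
  rw [inv_goldenRatio]
  have := goldenRatio_add_goldenConj
  linarith

lemma AA_identity (n : ℕ) (hn : 1 ≤ n) : (A (A n) : ℤ) = A n + n - 1 := by
  have hca := A_cast n
  have hcaa := A_cast (A n)
  rw [phi_eq] at hca hcaa
  set a : ℤ := ⌊(n : ℝ) * goldenRatio⌋ with ha
  have hirr : Irrational ((n : ℝ) * goldenRatio) := by
    exact goldenRatio_irrational.natCast_mul (m := n) (by omega)
  have hflt : (a : ℝ) < (n : ℝ) * goldenRatio :=
    lt_of_le_of_ne (Int.floor_le _) (fun hc => (hirr.ne_int a) hc.symm)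
  have hfgt : (n : ℝ) * goldenRatio < a + 1 := Int.lt_floor_add_one _
  have hfrac1 : (0:ℝ) < (n : ℝ) * goldenRatio - a := by linarith
  have hfrac2 : (n : ℝ) * goldenRatio - a < 1 := by linarith
  -- a * φ = a + n - (frac)·φ⁻¹
  have hid : (a : ℝ) * goldenRatio = a + n - ((n : ℝ) * goldenRatio - a) * goldenRatio⁻¹ := by
    have hne : goldenRatio ≠ 0 := goldenRatio_ne_zero
    rw [gold_inv_eq]
    field_simp
    ring_nf
    nlinarith [Real.sq_sqrt (show (0:ℝ) ≤ 5 by norm_num)]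
  have hb1 : (0:ℝ) < ((n : ℝ) * goldenRatio - a) * goldenRatio⁻¹ := by positivity
  have hb2 : ((n : ℝ) * goldenRatio - a) * goldenRatio⁻¹ < 1 := by
    calc ((n : ℝ) * goldenRatio - a) * goldenRatio⁻¹ < 1 * goldenRatio⁻¹ := by
          apply mul_lt_mul_of_pos_right hfrac2 inv_gold_pos
      _ < 1 := by simpa using inv_gold_lt_one
  have hfloor : ⌊(a : ℝ) * goldenRatio⌋ = a + n - 1 := by
    rw [Int.floor_eq_iff]
    constructor
    · push_cast; linarith
    · push_cast; linarith
  have h3 : ((A n : ℕ) : ℝ) = (a : ℝ) := by exact_mod_cast hca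
  rw [hcaa, h3, hfloor, hca]

/-! ### chains and rep constructions -/

def eChain (k : ℕ) : List ℕ := (List.range (k + 1)).map (fun j => 2 * j)
def oChain (k : ℕ) : List ℕ := (List.range (k + 1)).map (fun j => 2 * j + 1)

lemma eChain_adm (k : ℕ) : Adm (eChain k) :=
  (List.pairwise_lt_range (n := k + 1)).map _ (fun _ _ hab => by omega)

lemma oChain_adm (k : ℕ) : Adm (oChain k) :=
  (List.pairwise_lt_range (n := k + 1)).map _ (fun _ _ hab => by omega)

lemma eChain_mem (k i : ℕ) (h : i ∈ eChain k) : i ≤ 2 * k ∧ Even i := by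
  simp only [eChain, List.mem_map, List.mem_range] at h
  obtain ⟨j, hj, rfl⟩ := h
  exact ⟨by omega, even_two_mul j⟩

lemma oChain_mem (k i : ℕ) (h : i ∈ oChain k) : i ≤ 2 * k + 1 := by
  simp only [oChain, List.mem_map, List.mem_range] at h
  obtain ⟨j, hj, rfl⟩ := h
  omega

lemma eChain_zval (k : ℕ) : zval (eChain k) + 1 = Nat.fib (2 * k + 3) := by
  induction k with
  | zero => decide
  | succ k ih =>
    have h0 : eChain (k + 1) = eChain k ++ [2 * (k + 1)] := by
      rw [eChain, List.range_succ, List.map_append]; rfl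
    rw [h0, zval_append, zval_cons, zval_nil,
      show 2 * (k + 1) + 2 = 2 * k + 4 by ring,
      show 2 * (k + 1) + 3 = 2 * k + 5 by ring]
    have hf : Nat.fib (2 * k + 5) = Nat.fib (2 * k + 3) + Nat.fib (2 * k + 4) := by
      rw [show 2 * k + 5 = 2 * k + 3 + 2 by ring, Nat.fib_add_two,
        show 2 * k + 3 + 1 = 2 * k + 4 by ring]
    omega

lemma oChain_zval (k : ℕ) : zval (oChain k) + 1 = Nat.fib (2 * k + 4) := by
  induction k with
  | zero => decide
  | succ k ih =>
    have h0 : oChain (k + 1) = oChain k ++ [2 * (k + 1) + 1] := by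
      rw [oChain, List.range_succ, List.map_append]; rfl
    rw [h0, zval_append, zval_cons, zval_nil,
      show 2 * (k + 1) + 1 + 2 = 2 * k + 5 by ring,
      show 2 * (k + 1) + 4 = 2 * k + 6 by ring]
    have hf : Nat.fib (2 * k + 6) = Nat.fib (2 * k + 4) + Nat.fib (2 * k + 5) := by
      rw [show 2 * k + 6 = 2 * k + 4 + 2 by ring, Nat.fib_add_two,
        show 2 * k + 4 + 1 = 2 * k + 5 by ring]
    omega

lemma eChain_head (k : ℕ) : ∃ t, eChain k = 0 :: t := by
  rw [eChain, List.range_succ_eq_map, List.map_cons]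
  exact ⟨_, rfl⟩

lemma oChain_head (k : ℕ) : ∃ t, oChain k = 1 :: t := by
  rw [oChain, List.range_succ_eq_map, List.map_cons]
  exact ⟨_, rfl⟩

lemma map_add_adm (l : List ℕ) (c : ℕ) (h : Adm l) : Adm (l.map (· + c)) :=
  h.map _ (fun _ _ hab => by omega)

lemma zval_map_two (l : List ℕ) : zval (l.map (· + 2)) = zval l + sval l := by
  induction l with
  | nil => simp [zval, sval]
  | cons m t ih =>
    have h1 : (m :: t).map (· + 2) = (m + 2) :: t.map (· + 2) := rfl
    rw [h1, zval_cons, ih, sval_cons, zval_cons]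
    have : Nat.fib (m + 2 + 2) = Nat.fib (m + 2) + Nat.fib (m + 3) := Nat.fib_add_two
    omega

lemma sval_eq (l : List ℕ) : sval l = zval (l.map (· + 1)) := rfl

/-- rep of A(n), odd head -/
lemma repA_odd (m : ℕ) (t : List ℕ) (hm : ¬ Even m) (h : Adm (m :: t)) :
    Adm ((m + 1) :: t.map (· + 1)) ∧ zval ((m + 1) :: t.map (· + 1)) = A (zval (m :: t)) := by
  constructor
  · exact map_add_adm (m :: t) 1 h
  · rw [show (m + 1) :: t.map (· + 1) = (m :: t).map (· + 1) from rfl, ← sval_eq,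
      A_odd m t hm h]

/-- rep of A(n), even head -/
lemma repA_even (m : ℕ) (t : List ℕ) (hm : Even m) (h : Adm (m :: t)) :
    ∃ l, Adm (0 :: l) ∧ zval (0 :: l) = A (zval (m :: t)) := by
  obtain ⟨e', he'⟩ := eChain_head (m / 2)
  have hm2 : 2 * (m / 2) = m := by
    obtain ⟨r, rfl⟩ := hm; omega
  refine ⟨e' ++ t.map (· + 1), ?_, ?_⟩
  · rw [show (0 : ℕ) :: (e' ++ t.map (· + 1)) = (0 :: e') ++ t.map (· + 1) from rfl, ← he',
      Adm, List.pairwise_append]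
    refine ⟨eChain_adm (m / 2), map_add_adm t 1 h.tail, ?_⟩
    intro a ha b hb
    have h1 := (eChain_mem (m / 2) a ha).1
    simp only [List.mem_map] at hb
    obtain ⟨i, hi, rfl⟩ := hb
    have := h.head_le i hi
    omega
  · rw [show (0 : ℕ) :: (e' ++ t.map (· + 1)) = (0 :: e') ++ t.map (· + 1) from rfl, ← he',
      zval_append]
    have h1 := eChain_zval (m / 2)
    rw [hm2] at h1
    have h2 := A_even m t hm h
    rw [sval_cons] at h2
    rw [← sval_eq]
    omega

/-- rep of B(n), odd head -/
lemma repB_odd (m : ℕ) (t : List ℕ) (hm : ¬ Even m) (h : Adm (m :: t)) :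
    Adm ((m + 2) :: t.map (· + 2)) ∧ zval ((m + 2) :: t.map (· + 2)) = B (zval (m :: t)) := by
  constructor
  · exact map_add_adm (m :: t) 2 h
  · rw [show (m + 2) :: t.map (· + 2) = (m :: t).map (· + 2) from rfl, zval_map_two,
      B_eq, A_odd m t hm h]

/-- rep of B(n), even head -/
lemma repB_even (m : ℕ) (t : List ℕ) (hm : Even m) (h : Adm (m :: t)) :
    ∃ l, Adm (1 :: l) ∧ zval (1 :: l) = B (zval (m :: t)) := by
  obtain ⟨o', ho'⟩ := oChain_head (m / 2)
  have hm2 : 2 * (m / 2) = m := by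
    obtain ⟨r, rfl⟩ := hm; omega
  refine ⟨o' ++ t.map (· + 2), ?_, ?_⟩
  · rw [show (1 : ℕ) :: (o' ++ t.map (· + 2)) = (1 :: o') ++ t.map (· + 2) from rfl, ← ho',
      Adm, List.pairwise_append]
    refine ⟨oChain_adm (m / 2), map_add_adm t 2 h.tail, ?_⟩
    intro a ha b hb
    have h1 := oChain_mem (m / 2) a ha
    simp only [List.mem_map] at hb
    obtain ⟨i, hi, rfl⟩ := hb
    have := h.head_le i hi
    omega
  · rw [show (1 : ℕ) :: (o' ++ t.map (· + 2)) = (1 :: o') ++ t.map (· + 2) from rfl, ← ho',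
      zval_append, zval_map_two]
    have h1 := oChain_zval (m / 2)
    rw [hm2] at h1
    have h2 := A_even m t hm h
    rw [sval_cons, zval_cons] at h2
    have h3 := B_eq (zval (m :: t))
    rw [zval_cons] at h3 ⊢
    have hf : Nat.fib (m + 4) = Nat.fib (m + 2) + Nat.fib (m + 3) := Nat.fib_add_two
    omega

/-! ### class lemmas -/

lemma rep_cons (k : ℕ) (hk : 1 ≤ k) : ∃ m t, Adm (m :: t) ∧ zval (m :: t) = k := by
  obtain ⟨l, hA, hv, -⟩ := zval_exists k
  rcases l with _ | ⟨m, t⟩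
  · rw [zval_nil] at hv; omega
  · exact ⟨m, t, hA, hv⟩

/-- a representation of A k with even head -/
lemma repA' (k : ℕ) (hk : 1 ≤ k) :
    ∃ m t, Adm (m :: t) ∧ zval (m :: t) = A k ∧ Even m := by
  obtain ⟨m, t, hA, hv⟩ := rep_cons k hk
  by_cases hm : Even m
  · obtain ⟨l, h1, h2⟩ := repA_even m t hm hA
    exact ⟨0, l, h1, by rw [h2, hv], Even.zero⟩
  · obtain ⟨h1, h2⟩ := repA_odd m t hm hA
    refine ⟨m + 1, t.map (· + 1), h1, by rw [h2, hv], ?_⟩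
    rcases Nat.even_or_odd m with h | h
    · exact absurd h hm
    · exact h.add_one

/-- a representation of B k with odd head -/
lemma repB' (k : ℕ) (hk : 1 ≤ k) :
    ∃ m t, Adm (m :: t) ∧ zval (m :: t) = B k ∧ ¬ Even m := by
  obtain ⟨m, t, hA, hv⟩ := rep_cons k hk
  by_cases hm : Even m
  · obtain ⟨l, h1, h2⟩ := repB_even m t hm hA
    exact ⟨1, l, h1, by rw [h2, hv], by simp⟩
  · obtain ⟨h1, h2⟩ := repB_odd m t hm hA
    refine ⟨m + 2, t.map (· + 2), h1, by rw [h2, hv], ?_⟩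
    simpa [Nat.even_add] using hm

lemma classAA (k : ℕ) (hk : 1 ≤ k) : ∃ l, Adm (0 :: l) ∧ zval (0 :: l) = A (A k) := by
  obtain ⟨m, t, hA, hv, hm⟩ := repA' k hk
  obtain ⟨l, h1, h2⟩ := repA_even m t hm hA
  exact ⟨l, h1, by rw [h2, hv]⟩

lemma classBA (k : ℕ) (hk : 1 ≤ k) : ∃ l, Adm (1 :: l) ∧ zval (1 :: l) = B (A k) := by
  obtain ⟨m, t, hA, hv, hm⟩ := repA' k hk
  obtain ⟨l, h1, h2⟩ := repB_even m t hm hA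
  exact ⟨l, h1, by rw [h2, hv]⟩

lemma classAB (k : ℕ) (hk : 1 ≤ k) :
    ∃ m l, Adm (m :: l) ∧ zval (m :: l) = A (B k) ∧ 2 ≤ m := by
  obtain ⟨m, t, hA, hv, hm⟩ := repB' k hk
  obtain ⟨h1, h2⟩ := repA_odd m t hm hA
  refine ⟨m + 1, t.map (· + 1), h1, by rw [h2, hv], ?_⟩
  rcases Nat.even_or_odd m with h | h
  · exact absurd h hm
  · obtain ⟨r, hr⟩ := h; omega

lemma classBB (k : ℕ) (hk : 1 ≤ k) :
    ∃ m l, Adm (m :: l) ∧ zval (m :: l) = B (B k) ∧ 3 ≤ m := by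
  obtain ⟨m, t, hA, hv, hm⟩ := repB' k hk
  obtain ⟨h1, h2⟩ := repB_odd m t hm hA
  refine ⟨m + 2, t.map (· + 2), h1, by rw [h2, hv], ?_⟩
  rcases Nat.even_or_odd m with h | h
  · exact absurd h hm
  · obtain ⟨r, hr⟩ := h; omega

/-! ### digits and lists -/

lemma isZeck_of_rep (l : List ℕ) (h : Adm l) :
    IsZeck (zval l) (fun i => if i ∈ l then 1 else 0) := by
  have hsep : ∀ a ∈ l, ∀ b ∈ l, a ≠ b → (a + 2 ≤ b ∨ b + 2 ≤ a) := by
    have hp : l.Pairwise (fun a b => a + 2 ≤ b ∨ b + 2 ≤ a) := h.imp (fun hab => Or.inl hab)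
    exact fun a ha b hb hab => by
      haveI : Std.Symm (fun a b : ℕ => a + 2 ≤ b ∨ b + 2 ≤ a) := ⟨fun x y hxy => hxy.symm⟩
      exact hp.forall ha hb hab
  refine ⟨fun i => by by_cases hi : i ∈ l <;> simp [hi], ?_, ?_, ?_⟩
  · rintro i ⟨hi, hi1⟩
    by_cases h1 : i ∈ l
    · by_cases h2 : i + 1 ∈ l
      · have := hsep i h1 (i + 1) h2 (by omega)
        omega
      · simp [h2] at hi1
    · simp [h1] at hi
  · apply Set.Finite.subset l.toFinset.finite_toSet
    intro i hi
    simp only [Function.mem_support] at hi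
    by_cases h1 : i ∈ l
    · simpa using h1
    · simp [h1] at hi
  · have hsub : Function.support (fun i => (if i ∈ l then 1 else 0) * Nat.fib (i + 2))
        ⊆ ↑l.toFinset := by
      intro i hi
      simp only [Function.mem_support] at hi
      by_cases h1 : i ∈ l
      · simpa using h1
      · simp [h1] at hi
    rw [finsum_eq_finset_sum_of_support_subset _ hsub]
    have : ∀ i ∈ l.toFinset, (if i ∈ l then 1 else 0) * Nat.fib (i + 2) = Nat.fib (i + 2) := by
      intro i hi
      rw [List.mem_toFinset] at hi
      simp [hi]
    rw [Finset.sum_congr rfl this, List.sum_toFinset _ h.nodup]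
    rfl

lemma rep_of_isZeck (N : ℕ) (d : ℕ → ℕ) (h : IsZeck N d) :
    ∃ l, Adm l ∧ zval l = N ∧ ∀ i, i ∈ l ↔ d i = 1 := by
  obtain ⟨h1, h2, h3, h4⟩ := h
  set s := h3.toFinset with hs
  have hmem : ∀ i, i ∈ s ↔ d i = 1 := by
    intro i
    rw [hs, Set.Finite.mem_toFinset, Function.mem_support]
    have := h1 i
    omega
  refine ⟨s.sort (· ≤ ·), ?_, ?_, fun i => by rw [Finset.mem_sort]; exact hmem i⟩
  · have hlt : (s.sort (· ≤ ·)).Pairwise (· < ·) := (Finset.sortedLT_sort s).pairwise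
    refine hlt.imp_of_mem ?_
    intro a b ha hb hab
    rw [Finset.mem_sort] at ha hb
    by_contra hcon
    have hb1 : b = a + 1 := by omega
    exact h2 a ⟨(hmem a).1 ha, by rw [← hb1]; exact (hmem b).1 hb⟩
  · have hsub : Function.support (fun i => d i * Nat.fib (i + 2)) ⊆ ↑s := by
      intro i hi
      simp only [Function.mem_support] at hi
      have : d i ≠ 0 := by intro hc; rw [hc] at hi; simp at hi
      have := h1 i
      rw [Finset.mem_coe, hmem i]
      omega
    have hsum : N = ∑ i ∈ s, d i * Nat.fib (i + 2) := by
      rw [h4, finsum_eq_finset_sum_of_support_subset _ hsub]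
    have hone : ∀ i ∈ s, d i * Nat.fib (i + 2) = Nat.fib (i + 2) := by
      intro i hi
      rw [(hmem i).1 hi, one_mul]
    rw [Finset.sum_congr rfl hone] at hsum
    have hnd : (s.sort (· ≤ ·)).Nodup := s.sort_nodup _
    have := List.sum_toFinset (fun i => Nat.fib (i + 2)) hnd
    rw [Finset.sort_toFinset] at this
    rw [zval, ← this, hsum]

/-! ### Rayleigh cover -/

lemma gold_conj_exp : Real.HolderConjugate goldenRatio (goldenRatio ^ 2) := by
  rw [Real.holderConjugate_iff]
  refine ⟨one_lt_goldenRatio, ?_⟩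
  rw [← inv_pow]
  exact inv_gold_base

lemma B_cast (n : ℕ) : (B n : ℤ) = ⌊(n : ℝ) * phi ^ 2⌋ := by
  rw [B, Int.toNat_of_nonneg]
  apply Int.floor_nonneg.2
  rw [phi_eq]
  positivity

lemma A_pos (n : ℕ) (hn : 1 ≤ n) : 1 ≤ A n := by
  have h := A_cast n
  have : (1 : ℤ) ≤ ⌊(n : ℝ) * phi⌋ := by
    apply Int.le_floor.2
    rw [phi_eq]
    calc ((1:ℤ) : ℝ) = 1 * 1 := by norm_num
    _ ≤ (n : ℝ) * goldenRatio := by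
        apply mul_le_mul (by exact_mod_cast hn) (le_of_lt one_lt_goldenRatio) (by norm_num)
        positivity
  omega

lemma mem_S_of_A (j : ℕ) (hj : 1 ≤ j) :
    ((A j : ℤ)) ∈ {x : ℤ | ∃ k > 0, beattySeq goldenRatio k = x} := by
  refine ⟨(j : ℤ), by exact_mod_cast hj, ?_⟩
  rw [beattySeq, A_cast, phi_eq]
  norm_num

lemma mem_T_of_B (j : ℕ) (hj : 1 ≤ j) :
    ((B j : ℤ)) ∈ {x : ℤ | ∃ k > 0, beattySeq (goldenRatio ^ 2) k = x} := by
  refine ⟨(j : ℤ), by exact_mod_cast hj, ?_⟩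
  rw [beattySeq, B_cast, phi_eq]
  norm_num

lemma cover (N : ℕ) (hN : 1 ≤ N) : ∃ k : ℕ, 1 ≤ k ∧ (N = A k ∨ N = B k) := by
  have hsym := goldenRatio_irrational.beattySeq_symmDiff_beattySeq_pos gold_conj_exp
  have hmem : (N : ℤ) ∈ {x : ℤ | ∃ k > 0, beattySeq goldenRatio k = x}
      ∆ {x : ℤ | ∃ k > 0, beattySeq (goldenRatio ^ 2) k = x} := by
    rw [hsym]
    show (0:ℤ) < (N:ℤ)
    exact_mod_cast hN
  rw [Set.mem_symmDiff] at hmem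
  rcases hmem with ⟨⟨k, hk, hbk⟩, -⟩ | ⟨⟨k, hk, hbk⟩, -⟩
  · refine ⟨k.toNat, by omega, Or.inl ?_⟩
    have hkc : ((k.toNat : ℕ) : ℝ) = (k : ℝ) := by
      exact_mod_cast congrArg (fun z : ℤ => (z : ℝ)) (Int.toNat_of_nonneg (le_of_lt hk))
    have := A_cast k.toNat
    rw [phi_eq, hkc] at this
    rw [beattySeq] at hbk
    omega
  · refine ⟨k.toNat, by omega, Or.inr ?_⟩
    have hkc : ((k.toNat : ℕ) : ℝ) = (k : ℝ) := by
      exact_mod_cast congrArg (fun z : ℤ => (z : ℝ)) (Int.toNat_of_nonneg (le_of_lt hk))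
    have := B_cast k.toNat
    rw [phi_eq, hkc] at this
    rw [beattySeq] at hbk
    omega

/-- The numbers whose Zeckendorf expansion ends in digits d₁d₀ = 10 are exactly
the numbers B(A(n)) = 2⌊nphi⌋ + n − 1, n ≥ 1. -/
theorem zeck_ends_in_10 (N : ℕ) :
    (∃ d : ℕ → ℕ, IsZeck N d ∧ d 0 = 0 ∧ d 1 = 1) ↔
      ∃ n : ℕ, 1 ≤ n ∧ N = B (A n) ∧ (N : ℤ) = 2 * (A n : ℤ) + n - 1 := by
  constructor
  · rintro ⟨d, hZ, hd0, hd1⟩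
    obtain ⟨l, hAdm, hv, hiff⟩ := rep_of_isZeck N d hZ
    have h1l : 1 ∈ l := (hiff 1).2 hd1
    have h0l : 0 ∉ l := fun hc => by have := (hiff 0).1 hc; omega
    obtain ⟨m, t, rfl⟩ : ∃ m t, l = m :: t := by
      rcases l with _ | ⟨m, t⟩
      · simp at h1l
      · exact ⟨_, _, rfl⟩
    have hm1 : m = 1 := by
      rcases List.mem_cons.1 h1l with h | h
      · omega
      · have := hAdm.head_le 1 h; omega
    subst hm1
    have hNpos : 1 ≤ N := by
      rw [← hv, zval_cons]
      have : 0 < Nat.fib (1 + 2) := by decide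
      omega
    obtain ⟨j, hj, hNj⟩ := cover N hNpos
    rcases hNj with hNj | hNj
    · exfalso
      obtain ⟨k, hk, hjk⟩ := cover j hj
      rcases hjk with hjk | hjk
      · obtain ⟨l', hA', hv'⟩ := classAA k hk
        have heq : (0 : ℕ) :: l' = 1 :: t :=
          zval_inj N _ _ hA' hAdm (by rw [hv', ← hjk, ← hNj]) hv
        simp at heq
      · obtain ⟨m', l', hA', hv', hm'⟩ := classAB k hk
        have heq : m' :: l' = 1 :: t :=
          zval_inj N _ _ hA' hAdm (by rw [hv', ← hjk, ← hNj]) hv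
        have : m' = 1 := (List.cons_eq_cons.1 heq).1
        omega
    · obtain ⟨k, hk, hjk⟩ := cover j hj
      rcases hjk with hjk | hjk
      · refine ⟨k, hk, by rw [hNj, hjk], ?_⟩
        have h1 := B_eq (A k)
        have h2 := AA_identity k hk
        have h3 : N = A k + A (A k) := by rw [hNj, hjk, h1]
        omega
      · exfalso
        obtain ⟨m', l', hA', hv', hm'⟩ := classBB k hk
        have heq : m' :: l' = 1 :: t :=
          zval_inj N _ _ hA' hAdm (by rw [hv', ← hjk, ← hNj]) hv
        have : m' = 1 := (List.cons_eq_cons.1 heq).1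
        omega
  · rintro ⟨n, hn, hNB, -⟩
    obtain ⟨l, hA, hv⟩ := classBA n hn
    refine ⟨fun i => if i ∈ (1 :: l) then 1 else 0, ?_, ?_, ?_⟩
    · have hz := isZeck_of_rep (1 :: l) hA
      rw [hv, ← hNB] at hz
      exact hz
    · have h0 : (0 : ℕ) ∉ (1 :: l) := by
        intro hc
        rcases List.mem_cons.1 hc with h | h
        · omega
        · have := hA.head_le 0 h; omega
      simp [h0]
    · simp
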